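/- Let R(t) ∈ ℂ[[t]] and let n ≥ 1, k ≥ 0 be integers. (a) If k < n, then Ψ_n(R(t)·(1−z·t^k)^{−1}) = ψ_{n−k}(R(t))·(1−z·t^{n−k})^{−1} in ℂ[[z,t]]. (b) If k > n and the constant term of R is 0, then Ψ_n(R(t)·(1−z·t^k)^{−1}) = 0. -/

import Mathlib

/-- ψ_n : ℂ[[t]] → ℂ[[z,t]]. -/
noncomputable def psi (n : ℕ) (F : PowerSeries ℂ) : MvPowerSeries (Fin 2) ℂ :=
  fun e => if e 1 < n ∧ e 1 ≤ n * e 0 then PowerSeries.coeff (n * e 0 - e 1) F else 0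

/-- Ψ_n : ℂ[[z,t]] → ℂ[[z,t]], the coefficient of z^i t^j of Ψ_n(F) is the coefficient of
z^i t^(n·i−j) in F when n·i ≥ j, and 0 otherwise. -/
noncomputable def PsiCap (n : ℕ) (F : MvPowerSeries (Fin 2) ℂ) : MvPowerSeries (Fin 2) ℂ :=
  fun e => if e 1 ≤ n * e 0 then
      MvPowerSeries.coeff (Finsupp.single 0 (e 0) + Finsupp.single 1 (n * e 0 - e 1)) F
    else 0

/-- The canonical embedding ℂ[[t]] → ℂ[[z,t]]. -/
noncomputable def embT (R : PowerSeries ℂ) : MvPowerSeries (Fin 2) ℂ :=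
  fun e => if e 0 = 0 then PowerSeries.coeff (e 1) R else 0

private lemma fin2_cases (i : Fin 2) : i = 0 ∨ i = 1 := by
  match i with
  | 0 => exact Or.inl rfl
  | 1 => exact Or.inr rfl

private lemma fin2_eq (e f : Fin 2 →₀ ℕ) (h0 : e 0 = f 0) (h1 : e 1 = f 1) : e = f := by
  ext i
  rcases fin2_cases i with h | h <;> subst h <;> assumption

/-- The geometric series ∑ z^m t^(k·m). -/
noncomputable def Geo (k : ℕ) : MvPowerSeries (Fin 2) ℂ :=
  fun e => if e 1 = k * e 0 then 1 else 0

private lemma app0 (x y : ℕ) :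
    ((Finsupp.single 0 x + Finsupp.single 1 y : Fin 2 →₀ ℕ)) 0 = x := by
  simp [Finsupp.single_apply]

private lemma app1 (x y : ℕ) :
    ((Finsupp.single 0 x + Finsupp.single 1 y : Fin 2 →₀ ℕ)) 1 = y := by
  simp [Finsupp.single_apply]

private lemma geo_mul (k : ℕ) :
    (1 - (MvPowerSeries.X 0 : MvPowerSeries (Fin 2) ℂ) * MvPowerSeries.X 1 ^ k) * Geo k = 1 := by
  set d : Fin 2 →₀ ℕ := Finsupp.single 0 1 + Finsupp.single 1 k with hd
  have hX : (MvPowerSeries.X 0 : MvPowerSeries (Fin 2) ℂ) * MvPowerSeries.X 1 ^ k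
      = MvPowerSeries.monomial d 1 := by
    rw [MvPowerSeries.X_def, MvPowerSeries.X_pow_eq, MvPowerSeries.monomial_mul_monomial, one_mul]
  apply MvPowerSeries.ext
  intro e
  rw [sub_mul, one_mul, map_sub, hX, MvPowerSeries.coeff_monomial_mul, MvPowerSeries.coeff_one]
  have hd0 : d 0 = 1 := app0 1 k
  have hd1 : d 1 = k := app1 1 k
  have hsub0 : (e - d) 0 = e 0 - 1 := by rw [Finsupp.tsub_apply, hd0]
  have hsub1 : (e - d) 1 = e 1 - k := by rw [Finsupp.tsub_apply, hd1]
  have hle : d ≤ e ↔ 1 ≤ e 0 ∧ k ≤ e 1 := by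
    rw [Finsupp.le_def]
    constructor
    · intro h
      refine ⟨?_, ?_⟩
      · exact le_of_eq_of_le hd0.symm (h 0)
      · exact le_of_eq_of_le hd1.symm (h 1)
    · rintro ⟨h0, h1⟩ i
      rcases fin2_cases i with h | h <;> subst h
      · rw [hd0]; exact h0
      · rw [hd1]; exact h1
  have he0 : e = 0 ↔ e 0 = 0 ∧ e 1 = 0 := by
    constructor
    · intro h; rw [h]; exact ⟨rfl, rfl⟩
    · rintro ⟨h0, h1⟩; exact fin2_eq e 0 h0 h1
  rw [MvPowerSeries.coeff_apply, MvPowerSeries.coeff_apply]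
  simp only [Geo, hsub0, hsub1]
  by_cases hdl : d ≤ e
  · have h := hle.mp hdl
    rw [if_pos hdl, one_mul, if_neg (show ¬e = 0 by rw [he0]; omega)]
    have hx : k * (e 0 - 1) + k * 1 = k * e 0 := by
      rw [← Nat.mul_add, Nat.sub_add_cancel h.1]
    by_cases hc : e 1 = k * e 0
    · rw [if_pos hc, if_pos (show e 1 - k = k * (e 0 - 1) by omega)]; ring
    · rw [if_neg hc, if_neg (show ¬e 1 - k = k * (e 0 - 1) by omega)]; ring
  · rw [if_neg hdl]
    have h' : ¬(1 ≤ e 0 ∧ k ≤ e 1) := fun hh => hdl (hle.mpr hh)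
    by_cases hc : e 1 = k * e 0
    · rcases Nat.eq_zero_or_pos (e 0) with h0 | h0
      · rw [h0, mul_zero] at hc
        rw [if_pos (show e 1 = k * e 0 by rw [h0, mul_zero]; exact hc),
          if_pos (he0.mpr ⟨h0, hc⟩)]
        ring
      · exfalso
        have hk1 : k * 1 ≤ k * e 0 := Nat.mul_le_mul_left k h0
        omega
    · rw [if_neg hc,
        if_neg (show ¬e = 0 by rw [he0]; rintro ⟨u, v⟩; apply hc; rw [u, v, mul_zero])]
      ring

private lemma inv_eq_geo (k : ℕ) :
    ((1 - (MvPowerSeries.X 0 : MvPowerSeries (Fin 2) ℂ) * MvPowerSeries.X 1 ^ k))⁻¹ = Geo k := by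
  rw [MvPowerSeries.inv_eq_iff_mul_eq_one, mul_comm]
  · exact geo_mul k
  · simp

private lemma coeff_embT_mul_geo (R : PowerSeries ℂ) (k : ℕ) (e : Fin 2 →₀ ℕ) :
    MvPowerSeries.coeff e (embT R * Geo k)
      = if k * e 0 ≤ e 1 then PowerSeries.coeff (e 1 - k * e 0) R else 0 := by
  rw [MvPowerSeries.coeff_mul]
  by_cases h : k * e 0 ≤ e 1
  · rw [if_pos h]
    obtain ⟨a, ha⟩ : ∃ a : Fin 2 →₀ ℕ, a = Finsupp.single 1 (e 1 - k * e 0) := ⟨_, rfl⟩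
    obtain ⟨b, hb⟩ : ∃ b : Fin 2 →₀ ℕ,
        b = Finsupp.single 0 (e 0) + Finsupp.single 1 (k * e 0) := ⟨_, rfl⟩
    have ha0 : a 0 = 0 := by rw [ha]; simp [Finsupp.single_apply]
    have ha1 : a 1 = e 1 - k * e 0 := by rw [ha]; simp
    have hb0 : b 0 = e 0 := by rw [hb]; exact app0 _ _
    have hb1 : b 1 = k * e 0 := by rw [hb]; exact app1 _ _
    rw [Finset.sum_eq_single_of_mem (a, b)]
    · have hval1 : MvPowerSeries.coeff a (embT R)
          = PowerSeries.coeff (e 1 - k * e 0) R := by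
        rw [MvPowerSeries.coeff_apply]
        simp [embT, ha0, ha1]
      have hval2 : MvPowerSeries.coeff b (Geo k) = 1 := by
        rw [MvPowerSeries.coeff_apply]
        simp [Geo, hb0, hb1]
      rw [hval1, hval2, mul_one]
    · rw [Finset.HasAntidiagonal.mem_antidiagonal]
      apply fin2_eq <;> simp only [Finsupp.add_apply, ha0, ha1, hb0, hb1] <;> omega
    · rintro ⟨p1, p2⟩ hp hne
      rw [Finset.HasAntidiagonal.mem_antidiagonal] at hp
      have hp0 : p1 0 + p2 0 = e 0 := by rw [← hp, Finsupp.add_apply]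
      have hp1 : p1 1 + p2 1 = e 1 := by rw [← hp, Finsupp.add_apply]
      rw [MvPowerSeries.coeff_apply, MvPowerSeries.coeff_apply]
      simp only [embT, Geo]
      by_cases h1 : p1 0 = 0
      · rw [if_pos h1]
        by_cases h2 : p2 1 = k * p2 0
        · exfalso
          apply hne
          have hq0 : p2 0 = e 0 := by omega
          rw [hq0] at h2
          have hpb : p2 = b := fin2_eq _ _ (by rw [hb0, hq0]) (by rw [hb1, h2])
          have hpa : p1 = a := fin2_eq _ _ (by rw [ha0]; omega) (by rw [ha1]; omega)
          rw [hpa, hpb]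
        · rw [if_neg h2, mul_zero]
      · rw [if_neg h1, zero_mul]
  · rw [if_neg h]
    apply Finset.sum_eq_zero
    rintro ⟨p1, p2⟩ hp
    rw [Finset.HasAntidiagonal.mem_antidiagonal] at hp
    have hp0 : p1 0 + p2 0 = e 0 := by rw [← hp, Finsupp.add_apply]
    have hp1 : p1 1 + p2 1 = e 1 := by rw [← hp, Finsupp.add_apply]
    rw [MvPowerSeries.coeff_apply, MvPowerSeries.coeff_apply]
    simp only [embT, Geo]
    by_cases h1 : p1 0 = 0
    · rw [if_pos h1]
      by_cases h2 : p2 1 = k * p2 0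
      · exfalso
        have hq0 : p2 0 = e 0 := by omega
        rw [hq0] at h2
        omega
      · rw [if_neg h2, mul_zero]
    · rw [if_neg h1, zero_mul]

private lemma coeff_psi_mul_geo (R : PowerSeries ℂ) (m : ℕ) (hm : 1 ≤ m) (e : Fin 2 →₀ ℕ) :
    MvPowerSeries.coeff e (psi m R * Geo m)
      = if e 1 ≤ m * e 0 then PowerSeries.coeff (m * e 0 - e 1) R else 0 := by
  rw [MvPowerSeries.coeff_mul]
  by_cases h : e 1 ≤ m * e 0
  · rw [if_pos h]
    obtain ⟨q, hq⟩ : ∃ q, q = e 1 / m := ⟨_, rfl⟩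
    have hdm : m * q + e 1 % m = e 1 := by rw [hq]; exact Nat.div_add_mod (e 1) m
    have hmod : e 1 % m < m := Nat.mod_lt (e 1) (by omega)
    have hmq : m * q ≤ e 1 := by omega
    have hqe : q ≤ e 0 := Nat.le_of_mul_le_mul_left (le_trans hmq h) (by omega)
    obtain ⟨a, ha⟩ : ∃ a : Fin 2 →₀ ℕ,
        a = Finsupp.single 0 (e 0 - q) + Finsupp.single 1 (e 1 - m * q) := ⟨_, rfl⟩
    obtain ⟨b, hb⟩ : ∃ b : Fin 2 →₀ ℕ,
        b = Finsupp.single 0 q + Finsupp.single 1 (m * q) := ⟨_, rfl⟩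
    have ha0 : a 0 = e 0 - q := by rw [ha]; exact app0 _ _
    have ha1 : a 1 = e 1 - m * q := by rw [ha]; exact app1 _ _
    have hb0 : b 0 = q := by rw [hb]; exact app0 _ _
    have hb1 : b 1 = m * q := by rw [hb]; exact app1 _ _
    have hsplit : m * (e 0 - q) + m * q = m * e 0 := by
      rw [← Nat.mul_add, Nat.sub_add_cancel hqe]
    rw [Finset.sum_eq_single_of_mem (a, b)]
    · have hval1 : MvPowerSeries.coeff a (psi m R)
          = PowerSeries.coeff (m * e 0 - e 1) R := by
        rw [MvPowerSeries.coeff_apply]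
        simp only [psi, ha0, ha1]
        rw [if_pos ⟨by omega, by omega⟩,
          show m * (e 0 - q) - (e 1 - m * q) = m * e 0 - e 1 by omega]
      have hval2 : MvPowerSeries.coeff b (Geo m) = 1 := by
        rw [MvPowerSeries.coeff_apply]
        simp [Geo, hb0, hb1]
      rw [hval1, hval2, mul_one]
    · rw [Finset.HasAntidiagonal.mem_antidiagonal]
      apply fin2_eq <;> simp only [Finsupp.add_apply, ha0, ha1, hb0, hb1] <;> omega
    · rintro ⟨p1, p2⟩ hp hne
      rw [Finset.HasAntidiagonal.mem_antidiagonal] at hp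
      have hp0 : p1 0 + p2 0 = e 0 := by rw [← hp, Finsupp.add_apply]
      have hp1 : p1 1 + p2 1 = e 1 := by rw [← hp, Finsupp.add_apply]
      rw [MvPowerSeries.coeff_apply, MvPowerSeries.coeff_apply]
      simp only [psi, Geo]
      by_cases h2 : p2 1 = m * p2 0
      · by_cases h1 : p1 1 < m ∧ p1 1 ≤ m * p1 0
        · exfalso
          apply hne
          have hcomm : p2 0 * m = m * p2 0 := Nat.mul_comm _ _
          have hrq : p2 0 = q := by
            rw [hq]
            symm
            apply Nat.div_eq_of_lt_le
            · omega
            · rw [Nat.succ_mul]; omega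
          rw [hrq] at h2
          have hpb : p2 = b := fin2_eq _ _ (by rw [hb0, hrq]) (by rw [hb1, h2])
          have hpa : p1 = a := fin2_eq _ _ (by rw [ha0]; omega) (by rw [ha1]; omega)
          rw [hpa, hpb]
        · rw [if_neg h1, zero_mul]
      · rw [if_neg h2, mul_zero]
  · rw [if_neg h]
    apply Finset.sum_eq_zero
    rintro ⟨p1, p2⟩ hp
    rw [Finset.HasAntidiagonal.mem_antidiagonal] at hp
    have hp0 : p1 0 + p2 0 = e 0 := by rw [← hp, Finsupp.add_apply]
    have hp1 : p1 1 + p2 1 = e 1 := by rw [← hp, Finsupp.add_apply]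
    rw [MvPowerSeries.coeff_apply, MvPowerSeries.coeff_apply]
    simp only [psi, Geo]
    by_cases h2 : p2 1 = m * p2 0
    · by_cases h1 : p1 1 < m ∧ p1 1 ≤ m * p1 0
      · exfalso
        have hsum : m * p1 0 + m * p2 0 = m * e 0 := by rw [← Nat.mul_add, hp0]
        omega
      · rw [if_neg h1, zero_mul]
    · rw [if_neg h2, mul_zero]

private lemma coeff_psicap (n : ℕ) (F : MvPowerSeries (Fin 2) ℂ) (e : Fin 2 →₀ ℕ) :
    MvPowerSeries.coeff e (PsiCap n F)
      = if e 1 ≤ n * e 0 then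
          MvPowerSeries.coeff (Finsupp.single 0 (e 0) + Finsupp.single 1 (n * e 0 - e 1)) F
        else 0 := rfl

theorem stmt8 (n k : ℕ) (hn : 1 ≤ n) (R : PowerSeries ℂ) :
    (k < n →
      PsiCap n (embT R *
          (1 - (MvPowerSeries.X 0 : MvPowerSeries (Fin 2) ℂ) * (MvPowerSeries.X 1) ^ k)⁻¹)
        = psi (n - k) R *
          (1 - (MvPowerSeries.X 0 : MvPowerSeries (Fin 2) ℂ) * (MvPowerSeries.X 1) ^ (n - k))⁻¹) ∧
    (n < k → PowerSeries.constantCoeff R = 0 →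
      PsiCap n (embT R *
          (1 - (MvPowerSeries.X 0 : MvPowerSeries (Fin 2) ℂ) * (MvPowerSeries.X 1) ^ k)⁻¹)
        = 0) := by
  constructor
  · intro hk
    rw [inv_eq_geo k, inv_eq_geo (n - k)]
    apply MvPowerSeries.ext
    intro e
    rw [coeff_psicap, coeff_psi_mul_geo R (n - k) (by omega) e,
      coeff_embT_mul_geo, app0, app1]
    have hne : n * e 0 = (n - k) * e 0 + k * e 0 := by
      rw [← Nat.add_mul]
      congr 1
      omega
    split_ifs with h1 h2 h3 h3
    · rw [show n * e 0 - e 1 - k * e 0 = (n - k) * e 0 - e 1 by omega]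
    · omega
    · omega
    · rfl
    · omega
    · rfl
  · intro hk h0
    rw [inv_eq_geo k]
    apply MvPowerSeries.ext
    intro e
    rw [coeff_psicap, coeff_embT_mul_geo, app0, app1,
      show (MvPowerSeries.coeff e) (0 : MvPowerSeries (Fin 2) ℂ) = 0 from map_zero _]
    by_cases he0 : e 0 = 0
    · split_ifs with h1 h2
      · simp only [he0, mul_zero] at h1 h2 ⊢
        have he1 : e 1 = 0 := by omega
        rw [he1]
        simpa [PowerSeries.coeff_zero_eq_constantCoeff] using h0
      · rfl
      · rfl
    · have hlt : n * e 0 < k * e 0 :=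
        mul_lt_mul_of_pos_right hk (Nat.pos_of_ne_zero he0)
      split_ifs with h1 h2
      · omega
      · rfl
      · rfl
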